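/- Consider the directed graph G on the vertex set 𝒮 = {0,1}^{τ×N} with the following edges: for every S ∈ 𝒮, an edge from S to the all-zero matrix O; and for every S ∈ 𝒮, every ΔT ∈ {1,…,τ} and every nonempty subset I ⊆ {1,…,N}, an edge from S to η(ΔT, S, I). Then G is strongly connected: for every pair of states S, S' ∈ 𝒮 there is a directed path in G from S to S'. -/
import Mathlib


open Finset

/-- The `τ×τ` lower shift matrix `D`. -/
def shiftD (τ : ℕ) : Matrix (Fin τ) (Fin τ) ℤ :=
  Matrix.of fun r c => if (r : ℕ) = (c : ℕ) + 1 then 1 else 0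

/-- The `τ×N` indicator matrix `𝐈(I)`. -/
def indMat (τ N : ℕ) (I : Finset (Fin N)) : Matrix (Fin τ) (Fin N) ℤ :=
  Matrix.of fun r c => if (r : ℕ) = 0 ∧ c ∈ I then 1 else 0

/-- The state-update map `η(ΔT, S, I) = D^{ΔT−1}(D S + 𝐈(I))`. -/
def eta (τ N : ℕ) (ΔT : ℕ) (S : Matrix (Fin τ) (Fin N) ℤ) (I : Finset (Fin N)) :
    Matrix (Fin τ) (Fin N) ℤ :=
  shiftD τ ^ (ΔT - 1) * (shiftD τ * S + indMat τ N I)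

/-- The edge relation of the transition graph `G` on states: from every state there is an
edge to the all-zero matrix `O`, and for every `ΔT ∈ {1,…,τ}` and every nonempty
`I ⊆ {1,…,N}` there is an edge to `η(ΔT, S, I)`. -/
def stepRel (τ N : ℕ) (S S' : Matrix (Fin τ) (Fin N) ℤ) : Prop :=
  S' = 0 ∨ ∃ ΔT : ℕ, 1 ≤ ΔT ∧ ΔT ≤ τ ∧ ∃ I : Finset (Fin N), I.Nonempty ∧
    S' = eta τ N ΔT S I

/-- Extend a matrix's rows to all of `ℕ` by zero. -/
def ext0 {τ N : ℕ} (S : Matrix (Fin τ) (Fin N) ℤ) (j : ℕ) (c : Fin N) : ℤ :=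
  if h : j < τ then S ⟨j, h⟩ c else 0

/-- The state whose row `r` is row `r + k` of `S` (zero if out of range). -/
def shiftedUp {τ N : ℕ} (S : Matrix (Fin τ) (Fin N) ℤ) (k : ℕ) :
    Matrix (Fin τ) (Fin N) ℤ :=
  Matrix.of fun r c => ext0 S ((r : ℕ) + k) c

lemma shiftD_mul_apply {τ N : ℕ} (M : Matrix (Fin τ) (Fin N) ℤ) (r : Fin τ) (c : Fin N) :
    (shiftD τ * M) r c =
      if h : 1 ≤ (r : ℕ) then M ⟨(r : ℕ) - 1, lt_of_le_of_lt (Nat.sub_le _ _) r.2⟩ c else 0 := by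
  rw [Matrix.mul_apply]
  split
  · next h =>
    rw [Finset.sum_eq_single (⟨(r : ℕ) - 1, lt_of_le_of_lt (Nat.sub_le _ _) r.2⟩ : Fin τ)]
    · simp only [shiftD, Matrix.of_apply]
      rw [if_pos (by omega)]
      ring
    · intro b _ hb
      simp only [shiftD, Matrix.of_apply]
      rw [if_neg]
      · ring
      · intro hrb
        apply hb
        apply Fin.ext
        simp
        omega
    · intro h; exact absurd (Finset.mem_univ _) h
  · next h =>
    apply Finset.sum_eq_zero
    intro b _
    simp only [shiftD, Matrix.of_apply]
    rw [if_neg (by omega)]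
    ring

lemma shiftD_pow_mul_apply {τ N : ℕ} (m : ℕ) (M : Matrix (Fin τ) (Fin N) ℤ) (r : Fin τ)
    (c : Fin N) :
    (shiftD τ ^ m * M) r c =
      if h : m ≤ (r : ℕ) then M ⟨(r : ℕ) - m, lt_of_le_of_lt (Nat.sub_le _ _) r.2⟩ c else 0 := by
  induction m generalizing M with
  | zero => simp
  | succ m ih =>
    rw [pow_succ, Matrix.mul_assoc, ih (shiftD τ * M)]
    split
    · next h =>
      rw [shiftD_mul_apply]
      simp only [Fin.val_mk]
      split
      · next h2 =>
        rw [dif_pos (by omega)]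
        have he : (⟨(r : ℕ) - m - 1, lt_of_le_of_lt (Nat.sub_le _ _)
              (lt_of_le_of_lt (Nat.sub_le _ _) r.2)⟩ : Fin τ)
            = ⟨(r : ℕ) - (m + 1), lt_of_le_of_lt (Nat.sub_le _ _) r.2⟩ := by
          apply Fin.ext
          simp only [Fin.val_mk]
          omega
        rw [he]
      · next h2 => rw [dif_neg (by omega)]
    · next h => rw [dif_neg (by omega)]

lemma step_shiftedUp {τ N : ℕ} (S' : Matrix (Fin τ) (Fin N) ℤ)
    (hS' : ∀ r c, S' r c = 0 ∨ S' r c = 1) (k k' : ℕ) (hk : k ≤ τ) (h1 : k' < k)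
    (hrow : ∃ c, ext0 S' (k - 1) c ≠ 0)
    (hzero : ∀ j, k' ≤ j → j < k - 1 → ∀ c, ext0 S' j c = 0) :
    stepRel τ N (shiftedUp S' k) (shiftedUp S' k') := by
  classical
  refine Or.inr ⟨k - k', by omega, by omega,
    Finset.univ.filter (fun c => ext0 S' (k - 1) c ≠ 0), ?_, ?_⟩
  · obtain ⟨c, hc⟩ := hrow
    exact ⟨c, by simp [hc]⟩
  · ext r c
    rw [eta, shiftD_pow_mul_apply]
    have hb : ∀ j c, ext0 S' j c = 0 ∨ ext0 S' j c = 1 := by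
      intro j c; unfold ext0; split
      · exact hS' _ _
      · exact Or.inl rfl
    simp only [shiftedUp, Matrix.of_apply]
    split
    · next h =>
      rw [Matrix.add_apply, shiftD_mul_apply]
      simp only [Fin.val_mk, indMat, Matrix.of_apply, shiftedUp]
      split
      · next h2 =>
        rw [if_neg (by rintro ⟨ha, -⟩; omega), add_zero]
        have hidx : ((r : ℕ) - (k - k' - 1) - 1) + k = (r : ℕ) + k' := by omega
        rw [hidx]
      · next h2 =>
        have hidx : (r : ℕ) + k' = k - 1 := by omega
        rw [hidx, zero_add]
        rcases hb (k - 1) c with h0 | h0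
        · rw [h0, if_neg]
          rintro ⟨-, hc⟩
          simp only [Finset.mem_filter, Finset.mem_univ, true_and] at hc
          exact hc h0
        · have hmem : c ∈ Finset.univ.filter (fun c => ext0 S' (k - 1) c ≠ 0) := by
            simp only [Finset.mem_filter, Finset.mem_univ, true_and]
            rw [h0]; norm_num
          rw [h0, if_pos ⟨by omega, hmem⟩]
    · next h =>
      exact hzero ((r : ℕ) + k') (by omega) (by omega) c

/-- **Strong connectivity of the transition graph (irreducibility, Corollary 1 of the
paper).**  For every pair of binary states `S, S'` there is a directed path in `G`
from `S` to `S'`. -/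
theorem stmt_9 (τ N : ℕ) (hτ : 1 ≤ τ) (hN : 1 ≤ N)
    (S S' : Matrix (Fin τ) (Fin N) ℤ)
    (hS : ∀ r c, S r c = 0 ∨ S r c = 1) (hS' : ∀ r c, S' r c = 0 ∨ S' r c = 1) :
    Relation.ReflTransGen (stepRel τ N) S S' := by
  classical
  by_cases hz : S' = 0
  · exact Relation.ReflTransGen.single (Or.inl hz)
  · set R : ℕ → Prop := fun j => ∃ c, ext0 S' j c ≠ 0 with hR
    have hnotR : ∀ j, ¬ R j → ∀ c, ext0 S' j c = 0 := by
      intro j hj c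
      by_contra hc
      exact hj ⟨c, hc⟩
    have main : ∀ k, k ≤ τ → (k = 0 ∨ R (k - 1)) →
        Relation.ReflTransGen (stepRel τ N) (shiftedUp S' k) S' := by
      intro k
      induction k using Nat.strong_induction_on with
      | _ k ih =>
        intro hk hr
        rcases Nat.eq_zero_or_pos k with h0 | hpos
        · subst h0
          have h : shiftedUp S' 0 = S' := by
            ext r c
            simp [shiftedUp, ext0, r.2]
          rw [h]
        · have hrow : R (k - 1) := by
            rcases hr with h | h
            · omega
            · exact h
          by_cases hex : ∃ j, j < k - 1 ∧ R j
          · obtain ⟨j0, hj0, hRj0⟩ := hex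
            have hk2 : 2 ≤ k := by omega
            have hRg : R (Nat.findGreatest R (k - 2)) :=
              Nat.findGreatest_spec (m := j0) (by omega) hRj0
            have hgle : Nat.findGreatest R (k - 2) ≤ k - 2 := Nat.findGreatest_le _
            have hstep := step_shiftedUp S' hS' k (Nat.findGreatest R (k - 2) + 1) hk
              (by omega) hrow ?_
            · exact Relation.ReflTransGen.head hstep
                (ih _ (by omega) (by omega) (Or.inr (by simpa using hRg)))
            · intro j hj1 hj2 c
              exact hnotR j (Nat.findGreatest_is_greatest (P := R) (n := k - 2) (k := j) (by omega) (by omega)) c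
          · push_neg at hex
            have hstep := step_shiftedUp S' hS' k 0 hk (by omega) hrow ?_
            · exact Relation.ReflTransGen.head hstep (ih 0 (by omega) (by omega) (Or.inl rfl))
            · intro j hj1 hj2 c
              exact hnotR j (fun hRj => absurd hRj (hex j hj2)) c
    have hne : ∃ r c, S' r c ≠ 0 := by
      by_contra hcon
      push_neg at hcon
      exact hz (by ext r c; simp [hcon])
    obtain ⟨r0, c0, hr0⟩ := hne
    have hRr0 : R (r0 : ℕ) := ⟨c0, by simp [ext0, r0.2, hr0]⟩
    have hRg0 : R (Nat.findGreatest R (τ - 1)) :=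
      Nat.findGreatest_spec (m := (r0 : ℕ)) (by omega) hRr0
    have hg0le : Nat.findGreatest R (τ - 1) ≤ τ - 1 := Nat.findGreatest_le _
    have hz0 : shiftedUp S' (Nat.findGreatest R (τ - 1) + 1) = 0 := by
      ext r c
      simp only [shiftedUp, Matrix.of_apply, Matrix.zero_apply]
      by_cases hlt : (r : ℕ) + (Nat.findGreatest R (τ - 1) + 1) < τ
      · exact hnotR _ (Nat.findGreatest_is_greatest (P := R) (n := τ - 1) (by omega) (by omega)) c
      · simp [ext0, hlt]
    refine Relation.ReflTransGen.head (Or.inl hz0) ?_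
    rw [hz0]
    rw [← hz0]
    exact main _ (by omega) (Or.inr (by simpa using hRg0))
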